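/- For n ≥ 2, a layered permutation τ of size n is pop-stacked (i.e., lies in the image of T) if and only if τ has at least two falls, its first and last falls have size 1 or 2, and every inner fall has size 1, 2 or 3. Consequently the number of pop-stacked layered permutations of size n equals the coefficient of x^n in x + (x+x²)²/(1 − (x+x²+x³)). -/

import Mathlib

/-- Split a list into maximal strictly decreasing contiguous blocks ("falls"). -/
def fallSplit : List ℕ → List (List ℕ)
  | [] => []
  | a :: rest =>
    match fallSplit rest with
    | (b :: bs) :: gs => if b < a then (a :: b :: bs) :: gs else [a] :: (b :: bs) :: gs
    | gs => [a] :: gs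

/-- Split a list into maximal strictly increasing contiguous blocks ("runs"). -/
def runSplit : List ℕ → List (List ℕ)
  | [] => []
  | a :: rest =>
    match runSplit rest with
    | (b :: bs) :: gs => if a < b then (a :: b :: bs) :: gs else [a] :: (b :: bs) :: gs
    | gs => [a] :: gs

/-- The flip transformation `T`: reverse every fall. -/
def flipT (l : List ℕ) : List ℕ := ((fallSplit l).map List.reverse).flatten

/-- `l` is the one-line notation of a permutation of `{1, …, n}`. -/
def IsPermList (n : ℕ) (l : List ℕ) : Prop := l.Perm (List.range' 1 n)

/-- Every pair of adjacent runs overlaps: `min R₁ < max R₂` (pop-stacked condition). -/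
def Overlapping (l : List ℕ) : Prop :=
  ∀ R₁ R₂ : List ℕ, [R₁, R₂] <:+: runSplit l → ∃ a ∈ R₁, ∃ b ∈ R₂, a < b

/-- The layered permutation with layer sizes ms, starting at value s: the direct sum of
the decreasing permutations of the given sizes. -/
def layeredList : ℕ → List ℕ → List ℕ
  | _, [] => []
  | s, m :: ms => (List.range' s m).reverse ++ layeredList (s + m) ms

/-- A permutation is layered if it is the direct sum of decreasing permutations. -/
def IsLayered (l : List ℕ) : Prop :=
  ∃ ms : List ℕ, (∀ m ∈ ms, 0 < m) ∧ l = layeredList 1 ms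

open PowerSeries

namespace PSL

def consHead (a : ℕ) : List (List ℕ) → List (List ℕ)
  | [] => [[a]]
  | g :: gs => (a :: g) :: gs

@[simp] lemma consHead_nil (a : ℕ) : consHead a [] = [[a]] := rfl
@[simp] lemma consHead_cons (a : ℕ) (g gs) : consHead a (g :: gs) = (a :: g) :: gs := rfl

lemma consHead_append (a : ℕ) {A : List (List ℕ)} (B : List (List ℕ)) (hA : A ≠ []) :
    consHead a (A ++ B) = consHead a A ++ B := by
  cases A with
  | nil => exact absurd rfl hA
  | cons g gs => simp

def sing (l : List ℕ) : List (List ℕ) := l.map (fun x => [x])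

@[simp] lemma sing_nil : sing [] = [] := rfl
@[simp] lemma sing_cons (a : ℕ) (l) : sing (a :: l) = [a] :: sing l := rfl
@[simp] lemma sing_append (l₁ l₂ : List ℕ) : sing (l₁ ++ l₂) = sing l₁ ++ sing l₂ := by
  simp [sing]

/-- head structure of runSplit -/
lemma runSplit_cons (a : ℕ) (t : List ℕ) : ∃ g gs, runSplit (a :: t) = (a :: g) :: gs := by
  rcases h : runSplit t with _ | ⟨g, gs⟩
  · exact ⟨[], [], by simp [runSplit, h]⟩
  · rcases g with _ | ⟨b, bs⟩
    · exact ⟨[], [] :: gs, by simp [runSplit, h]⟩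
    · by_cases hb : a < b
      · exact ⟨b :: bs, gs, by simp [runSplit, h, hb]⟩
      · exact ⟨[], (b :: bs) :: gs, by simp [runSplit, h, hb]⟩

lemma fallSplit_cons (a : ℕ) (t : List ℕ) : ∃ g gs, fallSplit (a :: t) = (a :: g) :: gs := by
  rcases h : fallSplit t with _ | ⟨g, gs⟩
  · exact ⟨[], [], by simp [fallSplit, h]⟩
  · rcases g with _ | ⟨b, bs⟩
    · exact ⟨[], [] :: gs, by simp [fallSplit, h]⟩
    · by_cases hb : b < a
      · exact ⟨b :: bs, gs, by simp [fallSplit, h, hb]⟩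
      · exact ⟨[], (b :: bs) :: gs, by simp [fallSplit, h, hb]⟩

lemma runSplit_cons_cons (a b : ℕ) (t : List ℕ) :
    runSplit (a :: b :: t) =
      if a < b then consHead a (runSplit (b :: t)) else [a] :: runSplit (b :: t) := by
  obtain ⟨g, gs, h⟩ := runSplit_cons b t
  rw [show runSplit (a :: b :: t) = match runSplit (b :: t) with
    | (b :: bs) :: gs => if a < b then (a :: b :: bs) :: gs else [a] :: (b :: bs) :: gs
    | gs => [a] :: gs from rfl, h]
  by_cases hb : a < b <;> simp [hb]

lemma fallSplit_cons_cons (a b : ℕ) (t : List ℕ) :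
    fallSplit (a :: b :: t) =
      if b < a then consHead a (fallSplit (b :: t)) else [a] :: fallSplit (b :: t) := by
  obtain ⟨g, gs, h⟩ := fallSplit_cons b t
  rw [show fallSplit (a :: b :: t) = match fallSplit (b :: t) with
    | (b :: bs) :: gs => if b < a then (a :: b :: bs) :: gs else [a] :: (b :: bs) :: gs
    | gs => [a] :: gs from rfl, h]
  by_cases hb : b < a <;> simp [hb]

@[simp] lemma runSplit_singleton (a : ℕ) : runSplit [a] = [[a]] := rfl
@[simp] lemma fallSplit_singleton (a : ℕ) : fallSplit [a] = [[a]] := rfl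

end PSL
namespace PSL

lemma revRange_succ (s m : ℕ) :
    (List.range' s (m+1)).reverse = (s + m) :: (List.range' s m).reverse := by
  rw [List.range'_concat]
  simp

lemma runSplit_revRange (s m : ℕ) :
    runSplit ((List.range' s m).reverse) = sing ((List.range' s m).reverse) := by
  induction m with
  | zero => simp [runSplit]
  | succ k ih =>
    rw [revRange_succ]
    cases k with
    | zero => simp [sing]
    | succ j =>
      rw [revRange_succ] at ih ⊢
      rw [runSplit_cons_cons, if_neg (by omega), ih]
      simp

lemma runSplit_revRange_append (s : ℕ) {l : List ℕ} (c : ℕ) (t : List ℕ) (hl : l = c :: t)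
    (hc : s < c) : ∀ m, 0 < m →
    runSplit ((List.range' s m).reverse ++ l) =
      sing ((List.range' (s+1) (m-1)).reverse) ++ consHead s (runSplit l) := by
  intro m hm
  induction m with
  | zero => omega
  | succ k ih =>
    cases k with
    | zero =>
      subst hl
      obtain ⟨g, gs, h⟩ := runSplit_cons c t
      rw [show (List.range' s (0+1)).reverse ++ (c :: t) = s :: c :: t by simp,
        runSplit_cons_cons, if_pos hc, h]
      simp
    | succ j =>
      rw [revRange_succ, List.cons_append]
      have hj : (List.range' s (j+1)).reverse ++ l
          = (s + j) :: ((List.range' s j).reverse ++ l) := by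
        rw [revRange_succ]; simp
      rw [hj, runSplit_cons_cons, if_neg (by omega), ← hj, ih (by omega)]
      have : (List.range' (s+1) (j+1+1-1)).reverse = (s + j + 1) :: (List.range' (s+1) (j+1-1)).reverse := by
        rw [show j+1+1-1 = (j+1-1)+1 by omega, revRange_succ]
        congr 1
        omega
      rw [this]
      simp only [sing_cons, List.cons_append]
      congr 2

lemma fallSplit_revRange (s : ℕ) : ∀ m, 0 < m →
    fallSplit ((List.range' s m).reverse) = [(List.range' s m).reverse] := by
  intro m hm
  induction m with
  | zero => omega
  | succ k ih =>
    rw [revRange_succ]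
    cases k with
    | zero => simp
    | succ j =>
      rw [revRange_succ] at ih ⊢
      rw [fallSplit_cons_cons, if_pos (by omega), ih (by omega)]
      simp

lemma fallSplit_revRange_append (s : ℕ) {l : List ℕ} (c : ℕ) (t : List ℕ) (hl : l = c :: t)
    (hc : s < c) : ∀ m, 0 < m →
    fallSplit ((List.range' s m).reverse ++ l) =
      (List.range' s m).reverse :: fallSplit l := by
  intro m hm
  induction m with
  | zero => omega
  | succ k ih =>
    cases k with
    | zero =>
      subst hl
      obtain ⟨g, gs, h⟩ := fallSplit_cons c t
      rw [show (List.range' s (0+1)).reverse ++ (c :: t) = s :: c :: t by simp,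
        fallSplit_cons_cons, if_neg (by omega), h]
      simp
    | succ j =>
      have hj : (List.range' s (j+1)).reverse ++ l
          = (s + j) :: ((List.range' s j).reverse ++ l) := by
        rw [revRange_succ]; simp
      rw [revRange_succ, List.cons_append, hj, fallSplit_cons_cons, if_pos (by omega), ← hj,
        ih (by omega)]
      rw [revRange_succ]
      simp

end PSL
namespace PSL

def runsOf : ℕ → List ℕ → List (List ℕ)
  | _, [] => []
  | s, [m] => sing ((List.range' s m).reverse)
  | s, m :: h :: t =>
      sing ((List.range' (s+1) (m-1)).reverse) ++ consHead s (runsOf (s+m) (h :: t))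

def fallsOf : ℕ → List ℕ → List (List ℕ)
  | _, [] => []
  | s, m :: ms => (List.range' s m).reverse :: fallsOf (s+m) ms

lemma layered_cons (s m : ℕ) (ms : List ℕ) :
    layeredList s (m :: ms) = (List.range' s m).reverse ++ layeredList (s + m) ms := rfl

lemma layered_head : ∀ (ms : List ℕ) (s : ℕ), ms ≠ [] → (∀ m ∈ ms, 0 < m) →
    ∃ c t, layeredList s ms = c :: t ∧ s ≤ c
  | [], _, h, _ => absurd rfl h
  | m :: ms, s, _, pos => by
    have hm : 0 < m := pos m (by simp)
    rw [layered_cons, show m = (m-1)+1 by omega, revRange_succ]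
    exact ⟨s + (m-1), _, rfl, by omega⟩

lemma runsOf_eq : ∀ (ms : List ℕ) (s : ℕ), (∀ m ∈ ms, 0 < m) →
    runSplit (layeredList s ms) = runsOf s ms
  | [], s, _ => rfl
  | [m], s, pos => by
    rw [layered_cons, show layeredList (s+m) [] = [] from rfl, List.append_nil]
    exact runSplit_revRange s m
  | m :: h :: t, s, pos => by
    obtain ⟨c, t', hct, hc⟩ := layered_head (h :: t) (s + m) (by simp)
      (fun x hx => pos x (by simp [hx]))
    have hm : 0 < m := pos m (by simp)
    rw [layered_cons, runSplit_revRange_append s c t' hct (by omega) m hm,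
      runsOf_eq (h :: t) (s + m) (fun x hx => pos x (by simp [hx]))]
    rfl

lemma fallsOf_eq : ∀ (ms : List ℕ) (s : ℕ), (∀ m ∈ ms, 0 < m) →
    fallSplit (layeredList s ms) = fallsOf s ms
  | [], s, _ => rfl
  | [m], s, pos => by
    rw [layered_cons, show layeredList (s+m) [] = [] from rfl, List.append_nil]
    rw [fallSplit_revRange s m (pos m (by simp))]
    rfl
  | m :: h :: t, s, pos => by
    obtain ⟨c, t', hct, hc⟩ := layered_head (h :: t) (s + m) (by simp)
      (fun x hx => pos x (by simp [hx]))
    have hm : 0 < m := pos m (by simp)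
    rw [layered_cons, fallSplit_revRange_append s c t' hct (by omega) m hm,
      fallsOf_eq (h :: t) (s + m) (fun x hx => pos x (by simp [hx]))]
    rfl

lemma map_length_fallsOf : ∀ (ms : List ℕ) (s : ℕ),
    (fallsOf s ms).map List.length = ms
  | [], _ => rfl
  | m :: ms, s => by
    simp [fallsOf, map_length_fallsOf ms (s + m)]

lemma fallsOf_append : ∀ (l₁ l₂ : List ℕ) (s : ℕ),
    fallsOf s (l₁ ++ l₂) = fallsOf s l₁ ++ fallsOf (s + l₁.sum) l₂
  | [], l₂, s => by simp [fallsOf]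
  | m :: l₁, l₂, s => by
    rw [List.cons_append,
      show fallsOf s (m :: (l₁ ++ l₂)) = (List.range' s m).reverse :: fallsOf (s+m) (l₁ ++ l₂)
        from rfl,
      fallsOf_append l₁ l₂ (s + m)]
    simp [fallsOf, Nat.add_assoc]

lemma mem_runsOf : ∀ (ms : List ℕ) (s : ℕ) (R : List ℕ), R ∈ runsOf s ms →
    (R ≠ [] ∧ ∀ b ∈ R, s ≤ b)
  | [], s, R => by simp [runsOf]
  | [m], s, R => by
    intro hR
    simp only [runsOf, sing, List.mem_map] at hR
    obtain ⟨x, hx, rfl⟩ := hR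
    refine ⟨by simp, ?_⟩
    intro b hb
    simp only [List.mem_singleton] at hb
    subst hb
    rw [List.mem_reverse] at hx
    exact (List.mem_range'_1.mp hx).1
  | m :: h :: t, s, R => by
    intro hR
    simp only [runsOf, List.mem_append] at hR
    rcases hR with hR | hR
    · simp only [sing, List.mem_map] at hR
      obtain ⟨x, hx, rfl⟩ := hR
      refine ⟨by simp, ?_⟩
      intro b hb
      simp only [List.mem_singleton] at hb
      subst hb
      rw [List.mem_reverse] at hx
      have := (List.mem_range'_1.mp hx).1
      omega
    · rcases hg : runsOf (s + m) (h :: t) with _ | ⟨g, gs⟩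
      · rw [hg] at hR
        simp only [consHead_nil, List.mem_singleton] at hR
        subst hR
        exact ⟨by simp, by simp⟩
      · rw [hg] at hR
        simp only [consHead_cons, List.mem_cons] at hR
        rcases hR with rfl | hR
        · have hmem := mem_runsOf (h :: t) (s + m) g (by rw [hg]; simp)
          refine ⟨by simp, ?_⟩
          intro b hb
          rcases List.mem_cons.mp hb with rfl | hb
          · exact le_refl _
          · have := hmem.2 b hb; omega
        · have hmem := mem_runsOf (h :: t) (s + m) R (by rw [hg]; simp [hR])
          refine ⟨hmem.1, fun b hb => ?_⟩
          have := hmem.2 b hb; omega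

lemma runsOf_ne_nil (ms : List ℕ) (s : ℕ) (h : ms ≠ []) (pos : ∀ m ∈ ms, 0 < m) :
    runsOf s ms ≠ [] := by
  rcases ms with _ | ⟨m, ms⟩
  · exact absurd rfl h
  · rcases ms with _ | ⟨h2, t⟩
    · have hm : 0 < m := pos m (by simp)
      simp only [runsOf, sing, ne_eq, List.map_eq_nil_iff, List.reverse_eq_nil_iff]
      rw [List.range'_eq_nil_iff]
      omega
    · rw [runsOf]
      rcases runsOf (s+m) (h2 :: t) with _ | ⟨g, gs⟩ <;> simp

end PSL
namespace PSL

def Ovl (R₁ R₂ : List ℕ) : Prop := ∃ a ∈ R₁, ∃ b ∈ R₂, a < b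

def Good (gs : List (List ℕ)) : Prop := ∀ R₁ R₂, [R₁, R₂] <:+: gs → Ovl R₁ R₂

lemma good_nil : Good [] := by
  intro R₁ R₂ h
  have := h.length_le
  simp at this

lemma good_single (g : List ℕ) : Good [g] := by
  intro R₁ R₂ h
  have := h.length_le
  simp at this

lemma good_cons_cons {x y : List ℕ} {gs : List (List ℕ)} :
    Good (x :: y :: gs) ↔ Ovl x y ∧ Good (y :: gs) := by
  constructor
  · intro h
    refine ⟨h x y ⟨[], gs, rfl⟩, fun R₁ R₂ hR => h R₁ R₂ ?_⟩
    obtain ⟨u, v, huv⟩ := hR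
    exact ⟨x :: u, v, by rw [← huv]; simp⟩
  · rintro ⟨hxy, h⟩ R₁ R₂ hR
    rcases List.infix_cons_iff.mp hR with hp | hi
    · rcases List.cons_prefix_cons.mp hp with ⟨rfl, hp2⟩
      rcases List.cons_prefix_cons.mp hp2 with ⟨rfl, _⟩
      exact hxy
    · exact h R₁ R₂ hi

lemma not_good_of_infix {R₁ R₂ : List ℕ} {gs : List (List ℕ)}
    (h : [R₁, R₂] <:+: gs) (hno : ¬ Ovl R₁ R₂) : ¬ Good gs :=
  fun hg => hno (hg R₁ R₂ h)

lemma ovl_of_mem {R₁ R₂ : List ℕ} {a b : ℕ} (ha : a ∈ R₁) (hb : b ∈ R₂) (hab : a < b) :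
    Ovl R₁ R₂ := ⟨a, ha, b, hb, hab⟩

lemma not_ovl_single_single {a b : ℕ} (h : b ≤ a) : ¬ Ovl [a] [b] := by
  rintro ⟨x, hx, y, hy, hxy⟩
  simp only [List.mem_singleton] at hx hy
  omega

def Pin : List ℕ → Prop
  | [] => True
  | [b] => b ≤ 2
  | m :: h :: t => m ≤ 3 ∧ Pin (h :: t)

end PSL
namespace PSL

lemma sing_revRange_decomp (a k : ℕ) :
    sing ((List.range' a (k+3)).reverse)
      = sing ((List.range' (a+2) (k+1)).reverse) ++ [[a+1], [a]] := by
  have : List.range' a (k+3) = a :: (a+1) :: List.range' (a+2) (k+1) := by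
    rw [List.range'_succ, List.range'_succ]
  rw [this]
  simp

lemma lemA : ∀ (ms : List ℕ), (∀ m ∈ ms, 0 < m) → ∀ s x : ℕ, x < s →
    (Good (consHead x (runsOf s ms)) ↔ Pin ms)
  | [], _, s, x, _ => by
    exact iff_of_true (by exact good_single _) trivial
  | [m], pos, s, x, hx => by
    have hm : 0 < m := pos m (by simp)
    match m, hm with
    | 1, _ =>
      exact iff_of_true (good_single _) (by norm_num [Pin])
    | 2, _ =>
      refine iff_of_true ?_ (by norm_num [Pin])
      show Good [[x, s+1], [s]]
      exact good_cons_cons.mpr ⟨ovl_of_mem (a := x) (b := s) (by simp) (by simp) (by omega),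
        good_single _⟩
    | (k+3), _ =>
      refine iff_of_false ?_ (by rw [show Pin [k+3] = (k+3 ≤ 2) from rfl]; omega)
      have hA : sing ((List.range' (s+2) (k+1)).reverse) ≠ [] := by
        simp [sing, List.range'_eq_nil_iff]
      rw [show runsOf s [k+3] = sing ((List.range' s (k+3)).reverse) from rfl,
        sing_revRange_decomp, consHead_append x _ hA]
      exact not_good_of_infix (R₁ := [s+1]) (R₂ := [s])
        ⟨consHead x (sing ((List.range' (s+2) (k+1)).reverse)), [], by simp⟩
        (not_ovl_single_single (by omega))
  | m :: h :: t, pos, s, x, hx => by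
    have pos' : ∀ y ∈ h :: t, 0 < y := fun y hy => pos y (by simp [hy])
    have hm : 0 < m := pos m (by simp)
    obtain ⟨R, Rs, hgs⟩ : ∃ R Rs, runsOf (s+m) (h :: t) = R :: Rs := by
      rcases hg : runsOf (s+m) (h :: t) with _ | ⟨R, Rs⟩
      · exact absurd hg (runsOf_ne_nil _ _ (by simp) pos')
      · exact ⟨R, Rs, rfl⟩
    have hR := mem_runsOf (h :: t) (s+m) R (by rw [hgs]; simp)
    obtain ⟨r0, hr0⟩ : ∃ r0, r0 ∈ R := List.exists_mem_of_ne_nil R hR.1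
    have hr0b : s + m ≤ r0 := hR.2 r0 hr0
    have IH : Good ((s :: R) :: Rs) ↔ Pin (h :: t) := by
      have := lemA (h :: t) pos' (s+m) s (by omega)
      rwa [hgs, consHead_cons] at this
    have hmemRs : ∀ R₂ ∈ Rs, ∃ b ∈ R₂, s + m ≤ b := by
      intro R₂ h₂
      have := mem_runsOf (h :: t) (s+m) R₂ (by rw [hgs]; simp [h₂])
      obtain ⟨b, hb⟩ := List.exists_mem_of_ne_nil R₂ this.1
      exact ⟨b, hb, this.2 b hb⟩
    match m, hm with
    | 1, _ =>
      rw [show runsOf s (1 :: h :: t) = consHead s (runsOf (s+1) (h :: t)) by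
        simp [runsOf, sing], hgs, consHead_cons, consHead_cons,
        show Pin (1 :: h :: t) = (1 ≤ 3 ∧ Pin (h :: t)) from rfl]
      cases Rs with
      | nil =>
        exact iff_of_true (good_single _) ⟨by norm_num, IH.mp (good_single _)⟩
      | cons R₂ Rs' =>
        obtain ⟨b, hb, hbge⟩ := hmemRs R₂ (by simp)
        have hov1 : Ovl (x :: s :: R) R₂ := ovl_of_mem (a := s) (by simp) hb (by omega)
        have hov2 : Ovl (s :: R) R₂ := ovl_of_mem (a := s) (by simp) hb (by omega)
        constructor
        · intro hg
          exact ⟨by norm_num, IH.mp (good_cons_cons.mpr ⟨hov2, (good_cons_cons.mp hg).2⟩)⟩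
        · rintro ⟨-, hp⟩
          exact good_cons_cons.mpr ⟨hov1, (good_cons_cons.mp (IH.mpr hp)).2⟩
    | 2, _ =>
      rw [show runsOf s (2 :: h :: t) = [[s+1]] ++ consHead s (runsOf (s+2) (h :: t)) by
        simp [runsOf, sing], hgs, consHead_cons,
        show consHead x ([[s+1]] ++ (s :: R) :: Rs) = [x, s+1] :: (s :: R) :: Rs from rfl,
        good_cons_cons,
        show Pin (2 :: h :: t) = (2 ≤ 3 ∧ Pin (h :: t)) from rfl]
      have hov : Ovl [x, s+1] (s :: R) :=
        ovl_of_mem (a := x) (by simp) (show r0 ∈ s :: R by simp [hr0]) (by omega)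
      constructor
      · rintro ⟨-, hg⟩
        exact ⟨by norm_num, IH.mp hg⟩
      · rintro ⟨-, hp⟩
        exact ⟨hov, IH.mpr hp⟩
    | 3, _ =>
      rw [show runsOf s (3 :: h :: t) = [[s+2], [s+1]] ++ consHead s (runsOf (s+3) (h :: t)) by
        simp [runsOf, sing, List.range'_succ], hgs, consHead_cons,
        show consHead x ([[s+2], [s+1]] ++ (s :: R) :: Rs)
          = [x, s+2] :: [s+1] :: (s :: R) :: Rs from rfl,
        good_cons_cons, good_cons_cons,
        show Pin (3 :: h :: t) = (3 ≤ 3 ∧ Pin (h :: t)) from rfl]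
      have hov1 : Ovl [x, s+2] [s+1] := ⟨x, by simp, s+1, by simp, by omega⟩
      have hov2 : Ovl [s+1] (s :: R) :=
        ⟨s+1, by simp, r0, by simp [hr0], by omega⟩
      constructor
      · rintro ⟨-, -, hg⟩
        exact ⟨by norm_num, IH.mp hg⟩
      · rintro ⟨-, hp⟩
        exact ⟨hov1, hov2, IH.mpr hp⟩
    | (k+4), _ =>
      refine iff_of_false ?_
        (by rw [show Pin ((k+4) :: h :: t) = (k+4 ≤ 3 ∧ Pin (h :: t)) from rfl]
            rintro ⟨h3, -⟩; omega)
      have hA : sing ((List.range' (s+3) (k+1)).reverse) ≠ [] := by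
        simp [sing, List.range'_eq_nil_iff]
      rw [show runsOf s ((k+4) :: h :: t)
          = sing ((List.range' (s+1) (k+3)).reverse) ++ consHead s (runsOf (s+(k+4)) (h :: t))
          from rfl,
        sing_revRange_decomp (s+1) k,
        show (s+1)+2 = s+3 from rfl, show (s+1)+1 = s+2 from rfl,
        List.append_assoc, consHead_append x _ hA]
      exact not_good_of_infix (R₁ := [s+2]) (R₂ := [s+1])
        ⟨consHead x (sing ((List.range' (s+3) (k+1)).reverse)),
          consHead s (runsOf (s+(k+4)) (h :: t)), by simp⟩
        (not_ovl_single_single (by omega))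

end PSL
namespace PSL

def Pout (ms : List ℕ) : Prop :=
  ∃ a mid b, ms = a :: mid ++ [b] ∧ a ≤ 2 ∧ b ≤ 2 ∧ ∀ x ∈ mid, x ≤ 3

lemma pin_append : ∀ (mid : List ℕ) (b : ℕ),
    Pin (mid ++ [b]) ↔ (∀ x ∈ mid, x ≤ 3) ∧ b ≤ 2
  | [], b => by simp [Pin]
  | m :: mid, b => by
    rcases mid with _ | ⟨h, t⟩
    · rw [show ([m] ++ [b] : List ℕ) = [m, b] from rfl,
        show Pin [m, b] = (m ≤ 3 ∧ Pin [b]) from rfl,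
        show Pin [b] = (b ≤ 2) from rfl]
      simp
    · rw [show ((m :: h :: t) ++ [b] : List ℕ) = m :: ((h :: t) ++ [b]) from rfl,
        show Pin (m :: ((h :: t) ++ [b])) = (m ≤ 3 ∧ Pin ((h :: t) ++ [b])) from rfl,
        pin_append (h :: t) b]
      constructor
      · rintro ⟨h1, h2, h3⟩
        refine ⟨?_, h3⟩
        intro x hx
        rcases List.mem_cons.mp hx with rfl | hx'
        · exact h1
        · exact h2 x hx' 
      · rintro ⟨h1, h2⟩
        exact ⟨h1 m (by simp), fun x hx => h1 x (by simp [hx]), h2⟩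

lemma pout_cons {m : ℕ} {ms : List ℕ} (h : ms ≠ []) :
    Pout (m :: ms) ↔ m ≤ 2 ∧ Pin ms := by
  constructor
  · rintro ⟨a, mid, b, heq, ha, hb, hmid⟩
    rcases List.cons.injEq .. ▸ heq with ⟨rfl, rfl⟩
    exact ⟨ha, (pin_append mid b).mpr ⟨hmid, hb⟩⟩
  · rintro ⟨hm, hp⟩
    obtain ⟨mid, b, rfl⟩ : ∃ mid b, ms = mid ++ [b] := by
      refine ⟨ms.dropLast, ms.getLast h, ?_⟩
      exact (List.dropLast_append_getLast h).symm
    obtain ⟨h1, h2⟩ := (pin_append mid b).mp hp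
    exact ⟨m, mid, b, rfl, hm, h2, h1⟩

lemma lemB : ∀ (ms : List ℕ) (s : ℕ), (∀ m ∈ ms, 0 < m) → ms ≠ [] → ms ≠ [1] →
    (Good (runsOf s ms) ↔ Pout ms)
  | [], s, _, h, _ => absurd rfl h
  | [m], s, pos, _, h1 => by
    have hm : 0 < m := pos m (by simp)
    have hm2 : 2 ≤ m := by
      rcases Nat.lt_or_ge m 2 with h | h
      · interval_cases m
        exact absurd rfl h1
      · exact h
    refine iff_of_false ?_ ?_
    · obtain ⟨k, rfl⟩ : ∃ k, m = k + 2 := ⟨m - 2, by omega⟩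
      have hdec : sing ((List.range' s (k+2)).reverse)
          = sing ((List.range' (s+2) k).reverse) ++ [[s+1], [s]] := by
        have : List.range' s (k+2) = s :: (s+1) :: List.range' (s+2) k := by
          rw [List.range'_succ, List.range'_succ]
        rw [this]; simp
      rw [show runsOf s [k+2] = sing ((List.range' s (k+2)).reverse) from rfl, hdec]
      exact not_good_of_infix (R₁ := [s+1]) (R₂ := [s])
        ⟨sing ((List.range' (s+2) k).reverse), [], by simp⟩
        (not_ovl_single_single (by omega))
    · rintro ⟨a, mid, b, heq, -, -, -⟩
      have := congrArg List.length heq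
      simp at this
  | m :: h :: t, s, pos, _, _ => by
    have pos' : ∀ y ∈ h :: t, 0 < y := fun y hy => pos y (by simp [hy])
    have hm : 0 < m := pos m (by simp)
    obtain ⟨R, Rs, hgs⟩ : ∃ R Rs, runsOf (s+m) (h :: t) = R :: Rs := by
      rcases hg : runsOf (s+m) (h :: t) with _ | ⟨R, Rs⟩
      · exact absurd hg (runsOf_ne_nil _ _ (by simp) pos')
      · exact ⟨R, Rs, rfl⟩
    have hR := mem_runsOf (h :: t) (s+m) R (by rw [hgs]; simp)
    obtain ⟨r0, hr0⟩ : ∃ r0, r0 ∈ R := List.exists_mem_of_ne_nil R hR.1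
    have hr0b : s + m ≤ r0 := hR.2 r0 hr0
    have IH : Good ((s :: R) :: Rs) ↔ Pin (h :: t) := by
      have := lemA (h :: t) pos' (s+m) s (by omega)
      rwa [hgs, consHead_cons] at this
    rw [pout_cons (by simp)]
    match m, hm with
    | 1, _ =>
      rw [show runsOf s (1 :: h :: t) = consHead s (runsOf (s+1) (h :: t)) by
        simp [runsOf, sing], hgs, consHead_cons]
      exact IH.trans (by constructor; exact fun hp => ⟨by norm_num, hp⟩; exact fun hp => hp.2)
    | 2, _ =>
      rw [show runsOf s (2 :: h :: t) = [[s+1]] ++ consHead s (runsOf (s+2) (h :: t)) by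
        simp [runsOf, sing], hgs, consHead_cons,
        show ([[s+1]] ++ (s :: R) :: Rs : List (List ℕ)) = [s+1] :: (s :: R) :: Rs from rfl,
        good_cons_cons]
      have hov : Ovl [s+1] (s :: R) := ⟨s+1, by simp, r0, by simp [hr0], by omega⟩
      constructor
      · rintro ⟨-, hg⟩
        exact ⟨by norm_num, IH.mp hg⟩
      · rintro ⟨-, hp⟩
        exact ⟨hov, IH.mpr hp⟩
    | (k+3), _ =>
      refine iff_of_false ?_ (by rintro ⟨h3, -⟩; omega)
      rw [show runsOf s ((k+3) :: h :: t)
          = sing ((List.range' (s+1) (k+2)).reverse) ++ consHead s (runsOf (s+(k+3)) (h :: t))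
          from rfl]
      have hdec : sing ((List.range' (s+1) (k+2)).reverse)
          = sing ((List.range' (s+3) k).reverse) ++ [[s+2], [s+1]] := by
        have : List.range' (s+1) (k+2) = (s+1) :: (s+2) :: List.range' (s+3) k := by
          rw [List.range'_succ, List.range'_succ]
        rw [this]; simp
      rw [hdec, List.append_assoc]
      exact not_good_of_infix (R₁ := [s+2]) (R₂ := [s+1])
        ⟨sing ((List.range' (s+3) k).reverse),
          consHead s (runsOf (s+(k+3)) (h :: t)), by simp⟩
        (not_ovl_single_single (by omega))

end PSL
namespace PSL

def IsPermList' (n : ℕ) (l : List ℕ) : Prop := l.Perm (List.range' 1 n)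

lemma layered_perm : ∀ (ms : List ℕ) (s : ℕ), (layeredList s ms).Perm (List.range' s ms.sum)
  | [], s => by simp [layeredList]
  | m :: ms, s => by
    rw [layered_cons, List.sum_cons, ← List.range'_append_1 (s := s) (m := m) (n := ms.sum)]
    exact ((List.reverse_perm _).append (layered_perm ms (s + m)))

lemma isPermList_layered {n : ℕ} {ms : List ℕ} :
    IsPermList' n (layeredList 1 ms) ↔ ms.sum = n := by
  constructor
  · intro h
    have h2 := ((layered_perm ms 1).symm.trans h).length_eq
    simpa using h2
  · intro h
    rw [← h]
    exact layered_perm ms 1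

lemma pout_iff_falls (ms : List ℕ) (pos : ∀ m ∈ ms, 0 < m) :
    Pout ms ↔ ∃ F₁ Fmid Fₛ, fallsOf 1 ms = F₁ :: (Fmid ++ [Fₛ]) ∧
      (F₁.length = 1 ∨ F₁.length = 2) ∧ (Fₛ.length = 1 ∨ Fₛ.length = 2) ∧
      ∀ F ∈ Fmid, F.length = 1 ∨ F.length = 2 ∨ F.length = 3 := by
  constructor
  · rintro ⟨a, mid, b, rfl, ha, hb, hmid⟩
    refine ⟨(List.range' 1 a).reverse, fallsOf (1+a) mid,
      (List.range' (1 + (a :: mid).sum) b).reverse, ?_, ?_, ?_, ?_⟩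
    · rw [fallsOf_append (a :: mid) [b] 1]
      simp [fallsOf]
    · have : a ∈ (a :: (mid ++ [b]) : List ℕ) := by simp
      have := pos a this
      simp only [List.length_reverse, List.length_range']
      omega
    · have : b ∈ (a :: (mid ++ [b]) : List ℕ) := by simp
      have := pos b this
      simp only [List.length_reverse, List.length_range']
      omega
    · intro F hF
      have hFl : F.length ∈ mid := by
        rw [← map_length_fallsOf mid (1+a)]
        exact List.mem_map_of_mem hF
      have h1 := pos F.length (by simp [hFl])
      have h2 := hmid F.length hFl
      omega
  · rintro ⟨F₁, Fmid, Fₛ, heq, h1, h2, h3⟩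
    have hms : ms = F₁.length :: (Fmid.map List.length ++ [Fₛ.length]) := by
      rw [← map_length_fallsOf ms 1, heq]
      simp
    refine ⟨F₁.length, Fmid.map List.length, Fₛ.length, hms, by omega, by omega, ?_⟩
    intro x hx
    obtain ⟨F, hF, rfl⟩ := List.mem_map.mp hx
    rcases h3 F hF with h | h | h <;> omega

lemma part1 {n : ℕ} (hn : 2 ≤ n) {ms : List ℕ} (pos : ∀ m ∈ ms, 0 < m)
    (hsum : ms.sum = n) : (Good (runSplit (layeredList 1 ms)) ↔ Pout ms) := by
  have hne : ms ≠ [] := by rintro rfl; simp at hsum; omega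
  have hne1 : ms ≠ [1] := by rintro rfl; simp at hsum; omega
  rw [runsOf_eq ms 1 pos]
  exact lemB ms 1 pos hne hne1

end PSL
namespace PSL

def comps3 : ℕ → Finset (List ℕ)
  | 0 => {[]}
  | 1 => {[1]}
  | 2 => {[1,1], [2]}
  | (n+3) => ((comps3 (n+2)).image (List.cons 1)) ∪ ((comps3 (n+1)).image (List.cons 2)) ∪
      ((comps3 n).image (List.cons 3))

lemma mem_comps3 : ∀ (l : List ℕ) (n : ℕ),
    l ∈ comps3 n ↔ (∀ x ∈ l, x = 1 ∨ x = 2 ∨ x = 3) ∧ l.sum = n := by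
  intro l
  induction l with
  | nil =>
    intro n
    match n with
    | 0 => simp [comps3]
    | 1 => simp [comps3]
    | 2 => simp [comps3]
    | (n+3) => simp [comps3]
  | cons x l ih =>
    intro n
    match n with
    | 0 =>
      simp only [comps3, Finset.mem_singleton]
      constructor
      · intro h; exact absurd h (by simp)
      · rintro ⟨h1, h2⟩
        rcases h1 x (by simp) with rfl | rfl | rfl <;> simp [List.sum_cons] at h2
    | 1 =>
      simp only [comps3, Finset.mem_singleton]
      constructor
      · intro h
        rcases List.cons.injEq .. ▸ h with ⟨rfl, rfl⟩
        simp
      · rintro ⟨h1, h2⟩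
        rcases h1 x (by simp) with rfl | rfl | rfl <;>
          simp only [List.sum_cons] at h2
        · have hl : l.sum = 0 := by omega
          have : l = [] := by
            rcases l with _ | ⟨y, t⟩
            · rfl
            · rcases h1 y (by simp) with rfl | rfl | rfl <;> simp [List.sum_cons] at hl
          rw [this]
        · omega
        · omega
    | 2 =>
      simp only [comps3, Finset.mem_insert, Finset.mem_singleton]
      constructor
      · rintro (h | h)
        · rcases List.cons.injEq .. ▸ h with ⟨rfl, rfl⟩; simp
        · rcases List.cons.injEq .. ▸ h with ⟨rfl, rfl⟩; simp
      · rintro ⟨h1, h2⟩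
        rcases h1 x (by simp) with rfl | rfl | rfl <;>
          simp only [List.sum_cons] at h2
        · have hl : l.sum = 1 := by omega
          rcases l with _ | ⟨y, t⟩
          · simp at hl
          · rcases h1 y (by simp) with rfl | rfl | rfl <;>
              simp only [List.sum_cons] at hl
            · have ht : t.sum = 0 := by omega
              have : t = [] := by
                rcases t with _ | ⟨z, u⟩
                · rfl
                · rcases h1 z (by simp) with rfl | rfl | rfl <;> simp [List.sum_cons] at ht
              left; rw [this]
            · omega
            · omega
        · right
          have hl : l.sum = 0 := by omega
          have : l = [] := by
            rcases l with _ | ⟨y, t⟩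
            · rfl
            · rcases h1 y (by simp) with rfl | rfl | rfl <;> simp [List.sum_cons] at hl
          rw [this]
        · omega
    | (k+3) =>
      simp only [comps3, Finset.mem_union, Finset.mem_image]
      constructor
      · rintro ((⟨z, hz, hzz⟩ | ⟨z, hz, hzz⟩) | ⟨z, hz, hzz⟩) <;>
          rcases List.cons.injEq .. ▸ hzz with ⟨rfl, rfl⟩ <;>
          obtain ⟨hz1, hz2⟩ := (ih _).mp hz
      -- continue below
        · refine ⟨?_, by simp [List.sum_cons]; omega⟩
          intro y hy
          rcases List.mem_cons.mp hy with rfl | hy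
          · left; rfl
          · exact hz1 y hy
        · refine ⟨?_, by simp [List.sum_cons]; omega⟩
          intro y hy
          rcases List.mem_cons.mp hy with rfl | hy
          · right; left; rfl
          · exact hz1 y hy
        · refine ⟨?_, by simp [List.sum_cons]; omega⟩
          intro y hy
          rcases List.mem_cons.mp hy with rfl | hy
          · right; right; rfl
          · exact hz1 y hy
      · rintro ⟨h1, h2⟩
        have hl : ∀ y ∈ l, y = 1 ∨ y = 2 ∨ y = 3 := fun y hy => h1 y (by simp [hy])
        simp only [List.sum_cons] at h2
        rcases h1 x (by simp) with rfl | rfl | rfl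
        · exact Or.inl (Or.inl ⟨l, (ih _).mpr ⟨hl, by omega⟩, rfl⟩)
        · exact Or.inl (Or.inr ⟨l, (ih _).mpr ⟨hl, by omega⟩, rfl⟩)
        · exact Or.inr ⟨l, (ih _).mpr ⟨hl, by omega⟩, rfl⟩

def tib (n : ℕ) : ℕ := (comps3 n).card

lemma tib_zero : tib 0 = 1 := rfl
lemma tib_one : tib 1 = 1 := rfl
lemma tib_two : tib 2 = 2 := rfl

lemma tib_rec (n : ℕ) : tib (n+3) = tib (n+2) + tib (n+1) + tib n := by
  have hinj : ∀ a : ℕ, Function.Injective (List.cons a) := by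
    intro a x y h
    exact (List.cons.injEq .. ▸ h).2
  have hd12 : Disjoint ((comps3 (n+2)).image (List.cons 1)) ((comps3 (n+1)).image (List.cons 2)) := by
    rw [Finset.disjoint_left]
    rintro l hl1 hl2
    obtain ⟨z, _, rfl⟩ := Finset.mem_image.mp hl1
    obtain ⟨w, _, hw⟩ := Finset.mem_image.mp hl2
    exact absurd (List.cons.injEq .. ▸ hw).1 (by norm_num)
  have hd3 : Disjoint (((comps3 (n+2)).image (List.cons 1)) ∪ ((comps3 (n+1)).image (List.cons 2)))
      ((comps3 n).image (List.cons 3)) := by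
    rw [Finset.disjoint_left]
    rintro l hl1 hl2
    obtain ⟨w, _, hw⟩ := Finset.mem_image.mp hl2
    rcases Finset.mem_union.mp hl1 with h | h <;> obtain ⟨z, _, rfl⟩ := Finset.mem_image.mp h <;>
      exact absurd (List.cons.injEq .. ▸ hw).1 (by norm_num)
  rw [show tib (n+3) = (comps3 (n+3)).card from rfl, comps3,
    Finset.card_union_of_disjoint hd3, Finset.card_union_of_disjoint hd12,
    Finset.card_image_of_injective _ (hinj 1), Finset.card_image_of_injective _ (hinj 2),
    Finset.card_image_of_injective _ (hinj 3)]
  rfl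

end PSL
namespace PSL

def glue (a b : ℕ) (mid : List ℕ) : List ℕ := a :: mid ++ [b]

lemma glue_injective (a b : ℕ) : Function.Injective (glue a b) := by
  intro x y h
  simp only [glue, List.cons_append] at h
  have h2 := (List.cons.injEq .. ▸ h).2
  exact List.append_cancel_right h2

def compsGood (n : ℕ) : Finset (List ℕ) :=
  ((comps3 (n-2)).image (glue 1 1)) ∪
  (if 3 ≤ n then ((comps3 (n-3)).image (glue 1 2)) ∪ ((comps3 (n-3)).image (glue 2 1))
    else ∅) ∪
  (if 4 ≤ n then ((comps3 (n-4)).image (glue 2 2)) else ∅)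

lemma glue_sum (a b : ℕ) (mid : List ℕ) : (glue a b mid).sum = a + mid.sum + b := by
  simp [glue]
  omega

lemma mem_compsGood {n : ℕ} (hn : 2 ≤ n) (l : List ℕ) :
    l ∈ compsGood n ↔ ∃ a mid b, l = a :: mid ++ [b] ∧ 1 ≤ a ∧ a ≤ 2 ∧ 1 ≤ b ∧ b ≤ 2 ∧
      (∀ x ∈ mid, x = 1 ∨ x = 2 ∨ x = 3) ∧ l.sum = n := by
  constructor
  · intro h
    simp only [compsGood, Finset.mem_union] at h
    have main : ∀ a b : ℕ, 1 ≤ a → a ≤ 2 → 1 ≤ b → b ≤ 2 → ∀ k, a + k + b = n →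
        l ∈ (comps3 k).image (glue a b) →
        ∃ a mid b, l = a :: mid ++ [b] ∧ 1 ≤ a ∧ a ≤ 2 ∧ 1 ≤ b ∧ b ≤ 2 ∧
          (∀ x ∈ mid, x = 1 ∨ x = 2 ∨ x = 3) ∧ l.sum = n := by
      intro a b ha1 ha2 hb1 hb2 k hk hmem
      obtain ⟨mid, hmid, rfl⟩ := Finset.mem_image.mp hmem
      obtain ⟨h1, h2⟩ := (mem_comps3 mid k).mp hmid
      exact ⟨a, mid, b, rfl, ha1, ha2, hb1, hb2, h1, by rw [glue_sum]; omega⟩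
    rcases h with (h | h) | h
    · exact main 1 1 (by norm_num) (by norm_num) (by norm_num) (by norm_num) (n-2)
        (by omega) h
    · split_ifs at h with h3
      · rcases Finset.mem_union.mp h with h | h
        · exact main 1 2 (by norm_num) (by norm_num) (by norm_num) (by norm_num) (n-3)
            (by omega) h
        · exact main 2 1 (by norm_num) (by norm_num) (by norm_num) (by norm_num) (n-3)
            (by omega) h
      · simp at h
    · split_ifs at h with h4
      · exact main 2 2 (by norm_num) (by norm_num) (by norm_num) (by norm_num) (n-4)
          (by omega) h
      · simp at h
  · rintro ⟨a, mid, b, rfl, ha1, ha2, hb1, hb2, hmid, hsum⟩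
    have hsum' : a + mid.sum + b = n := by
      rw [show (a :: mid ++ [b] : List ℕ) = glue a b mid from rfl] at hsum
      rw [glue_sum] at hsum
      omega
    simp only [compsGood, Finset.mem_union]
    interval_cases a <;> interval_cases b
    · refine Or.inl (Or.inl (Finset.mem_image.mpr ⟨mid, ?_, rfl⟩))
      rw [mem_comps3]
      exact ⟨hmid, by omega⟩
    · refine Or.inl (Or.inr ?_)
      rw [if_pos (by omega)]
      refine Finset.mem_union.mpr (Or.inl (Finset.mem_image.mpr ⟨mid, ?_, rfl⟩))
      rw [mem_comps3]
      exact ⟨hmid, by omega⟩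
    · refine Or.inl (Or.inr ?_)
      rw [if_pos (by omega)]
      refine Finset.mem_union.mpr (Or.inr (Finset.mem_image.mpr ⟨mid, ?_, rfl⟩))
      rw [mem_comps3]
      exact ⟨hmid, by omega⟩
    · refine Or.inr ?_
      rw [if_pos (by omega)]
      refine Finset.mem_image.mpr ⟨mid, ?_, rfl⟩
      rw [mem_comps3]
      exact ⟨hmid, by omega⟩

lemma glue_image_disjoint {a b a' b' : ℕ} (h : a ≠ a' ∨ b ≠ b') (s s' : Finset (List ℕ)) :
    Disjoint (s.image (glue a b)) (s'.image (glue a' b')) := by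
  rw [Finset.disjoint_left]
  rintro l hl1 hl2
  obtain ⟨z, _, rfl⟩ := Finset.mem_image.mp hl1
  obtain ⟨w, _, hw⟩ := Finset.mem_image.mp hl2
  simp only [glue, List.cons_append] at hw
  have h1 := (List.cons.injEq .. ▸ hw).1
  have h2 := (List.cons.injEq .. ▸ hw).2
  have h3 : (w ++ [b']).getLast? = (z ++ [b]).getLast? := by rw [h2]
  rw [List.getLast?_concat, List.getLast?_concat] at h3
  rcases h with h | h
  · exact h (h1.symm)
  · exact h (Option.some.injEq .. ▸ h3).symm

lemma card_compsGood {n : ℕ} (hn : 2 ≤ n) :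
    (compsGood n).card = tib (n-2) + (if 3 ≤ n then tib (n-3) + tib (n-3) else 0) +
      (if 4 ≤ n then tib (n-4) else 0) := by
  have hcard : ∀ (a b k : ℕ), ((comps3 k).image (glue a b)).card = tib k := by
    intro a b k
    rw [Finset.card_image_of_injective _ (glue_injective a b)]
    rfl
  have d1 : Disjoint ((comps3 (n-2)).image (glue 1 1))
      (if 3 ≤ n then ((comps3 (n-3)).image (glue 1 2)) ∪ ((comps3 (n-3)).image (glue 2 1))
        else ∅) := by
    split_ifs with h3
    · exact Finset.disjoint_union_right.mpr
        ⟨glue_image_disjoint (by norm_num) _ _, glue_image_disjoint (by norm_num) _ _⟩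
    · simp
  have d2 : Disjoint (((comps3 (n-2)).image (glue 1 1)) ∪
      (if 3 ≤ n then ((comps3 (n-3)).image (glue 1 2)) ∪ ((comps3 (n-3)).image (glue 2 1))
        else ∅))
      (if 4 ≤ n then ((comps3 (n-4)).image (glue 2 2)) else ∅) := by
    refine Finset.disjoint_union_left.mpr ⟨?_, ?_⟩
    · split_ifs with h4
      · exact glue_image_disjoint (by norm_num) _ _
      · simp
    · split_ifs with h3 h4 h4
      · exact Finset.disjoint_union_left.mpr
          ⟨glue_image_disjoint (by norm_num) _ _, glue_image_disjoint (by norm_num) _ _⟩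
      · simp
      · simp
      · simp
  rw [compsGood, Finset.card_union_of_disjoint d2, Finset.card_union_of_disjoint d1]
  congr 2
  · exact hcard 1 1 (n-2)
  · split_ifs with h3
    · rw [Finset.card_union_of_disjoint (glue_image_disjoint (by norm_num) _ _),
        hcard 1 2 (n-3), hcard 2 1 (n-3)]
    · simp
  · split_ifs with h4
    · exact hcard 2 2 (n-4)
    · simp

end PSL
namespace PSL

open PowerSeries

lemma overlapping_iff (l : List ℕ) : Overlapping l ↔ Good (runSplit l) := Iff.rfl

lemma isPermList_layered' {n : ℕ} {ms : List ℕ} :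
    IsPermList n (layeredList 1 ms) ↔ ms.sum = n := isPermList_layered

noncomputable def F : ℚ⟦X⟧ := PowerSeries.mk (fun k => (tib k : ℚ))

lemma hFmul : F * (1 - ((X : ℚ⟦X⟧)^1 + X^2 + X^3)) = 1 := by
  ext k
  rw [mul_sub, mul_one, mul_add, mul_add, map_sub, map_add, map_add,
    coeff_mul_X_pow', coeff_mul_X_pow', coeff_mul_X_pow', coeff_one]
  simp only [F, coeff_mk]
  match k with
  | 0 => norm_num [tib_zero]
  | 1 => norm_num [tib_one, tib_zero]
  | 2 => norm_num [tib_two, tib_one, tib_zero]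
  | (j+3) =>
    rw [if_pos (by omega), if_pos (by omega), if_pos (by omega), if_neg (by omega),
      show j+3-1 = j+2 from rfl, show j+3-2 = j+1 from rfl, show j+3-3 = j from rfl,
      tib_rec j]
    push_cast
    ring

lemma hconst : constantCoeff (R := ℚ) (1 - ((X : ℚ⟦X⟧) + X^2 + X^3)) ≠ 0 := by
  simp

lemma hinv : (1 - ((X : ℚ⟦X⟧) + X^2 + X^3))⁻¹ = F := by
  rw [PowerSeries.inv_eq_iff_mul_eq_one hconst]
  have := hFmul
  rwa [pow_one] at this

lemma coeff_rhs {n : ℕ} (hn : 2 ≤ n) :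
    (PowerSeries.coeff (R := ℚ) n
        (PowerSeries.X + (PowerSeries.X + PowerSeries.X ^ 2) ^ 2 *
          (1 - (PowerSeries.X + PowerSeries.X ^ 2 + PowerSeries.X ^ 3))⁻¹))
      = ((tib (n-2) : ℚ) + (if 3 ≤ n then (tib (n-3) : ℚ) + (tib (n-3) : ℚ) else 0) +
        (if 4 ≤ n then (tib (n-4) : ℚ) else 0)) := by
  rw [hinv]
  have hexp : ((X + X^2)^2 : ℚ⟦X⟧) * F = X^2 * F + (X^3 * F + X^3 * F) + X^4 * F := by
    ring
  rw [map_add, hexp, map_add, map_add, map_add, coeff_X_pow_mul', coeff_X_pow_mul',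
    coeff_X_pow_mul', coeff_X]
  simp only [F, coeff_mk]
  rw [if_neg (show ¬ n = 1 by omega), if_pos (show 2 ≤ n by omega)]
  split_ifs <;> ring

end PSL
namespace PSL

lemma pos_of_memGood {n : ℕ} (hn : 2 ≤ n) {l : List ℕ} (hl : l ∈ compsGood n) :
    (∀ m ∈ l, 0 < m) ∧ l.sum = n ∧ Pout l := by
  obtain ⟨a, mid, b, rfl, ha1, ha2, hb1, hb2, hmid, hsum⟩ := (mem_compsGood hn l).mp hl
  refine ⟨?_, hsum, a, mid, b, rfl, ha2, hb2, fun x hx => by rcases hmid x hx with rfl|rfl|rfl <;> omega⟩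
  intro m hm
  rcases List.mem_cons.mp hm with rfl | hm
  · omega
  · rcases List.mem_append.mp hm with hm | hm
    · rcases hmid m hm with rfl | rfl | rfl <;> omega
    · simp only [List.mem_singleton] at hm
      omega

noncomputable def theEquiv (n : ℕ) (hn : 2 ≤ n) :
    {τ : List ℕ // IsPermList n τ ∧ IsLayered τ ∧ Overlapping τ} ≃ {l // l ∈ compsGood n} where
  toFun := fun τp => ⟨(fallSplit τp.1).map List.length, by
    obtain ⟨τ, hperm, hlay, hov⟩ := τp
    obtain ⟨ms, pos, rfl⟩ := hlay
    have hsum : ms.sum = n := isPermList_layered'.mp hperm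
    have hpout : Pout ms := (part1 hn pos hsum).mp ((overlapping_iff _).mp hov)
    rw [fallsOf_eq ms 1 pos, map_length_fallsOf]
    obtain ⟨a, mid, b, heq, ha, hb, hmid⟩ := hpout
    rw [mem_compsGood hn]
    refine ⟨a, mid, b, heq, ?_, ha, ?_, hb, ?_, hsum⟩
    · exact pos a (by rw [heq]; simp)
    · exact pos b (by rw [heq]; simp)
    · intro x hx
      have := pos x (by rw [heq]; simp [hx])
      have := hmid x hx
      omega⟩
  invFun := fun lp => ⟨layeredList 1 lp.1, by
    obtain ⟨l, hl⟩ := lp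
    obtain ⟨pos, hsum, hpout⟩ := pos_of_memGood hn hl
    refine ⟨isPermList_layered'.mpr hsum, ⟨l, pos, rfl⟩, ?_⟩
    exact (overlapping_iff _).mpr ((part1 hn pos hsum).mpr hpout)⟩
  left_inv := by
    rintro ⟨τ, hperm, hlay, hov⟩
    obtain ⟨ms, pos, rfl⟩ := hlay
    apply Subtype.ext
    simp only
    rw [fallsOf_eq ms 1 pos, map_length_fallsOf]
  right_inv := by
    rintro ⟨l, hl⟩
    obtain ⟨pos, hsum, hpout⟩ := pos_of_memGood hn hl
    apply Subtype.ext
    simp only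
    rw [fallsOf_eq l 1 pos, map_length_fallsOf]

lemma card_eq {n : ℕ} (hn : 2 ≤ n) :
    Nat.card {τ : List ℕ // IsPermList n τ ∧ IsLayered τ ∧ Overlapping τ}
      = (compsGood n).card := by
  rw [Nat.card_congr (theEquiv n hn)]
  exact Nat.card_eq_finsetCard (compsGood n)

end PSL


/-- For n ≥ 2, a layered permutation of size n is pop-stacked iff it has at least two
falls, its outer falls have size 1 or 2 and its inner falls have size 1, 2 or 3;
consequently pop-stacked layered permutations are counted by the coefficients of
x + (x+x²)²/(1−(x+x²+x³)). -/
theorem popStacked_layered_characterization (n : ℕ) (hn : 2 ≤ n) :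
    (∀ τ : List ℕ, IsPermList n τ → IsLayered τ →
      (Overlapping τ ↔
        ∃ F₁ Fmid Fₛ, fallSplit τ = F₁ :: (Fmid ++ [Fₛ]) ∧
          (F₁.length = 1 ∨ F₁.length = 2) ∧ (Fₛ.length = 1 ∨ Fₛ.length = 2) ∧
          ∀ F ∈ Fmid, F.length = 1 ∨ F.length = 2 ∨ F.length = 3)) ∧
    ((Nat.card {τ : List ℕ // IsPermList n τ ∧ IsLayered τ ∧ Overlapping τ} : ℚ) =
      PowerSeries.coeff (R := ℚ) n
        (PowerSeries.X + (PowerSeries.X + PowerSeries.X ^ 2) ^ 2 *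
          (1 - (PowerSeries.X + PowerSeries.X ^ 2 + PowerSeries.X ^ 3))⁻¹)) := by
  constructor
  · intro τ hperm hlay
    obtain ⟨ms, pos, rfl⟩ := hlay
    have hsum : ms.sum = n := PSL.isPermList_layered'.mp hperm
    rw [PSL.overlapping_iff, PSL.part1 hn pos hsum,
      PSL.fallsOf_eq ms 1 pos]
    exact PSL.pout_iff_falls ms pos
  · rw [PSL.card_eq hn, PSL.coeff_rhs hn, PSL.card_compsGood hn]
    push_cast
    split_ifs <;> push_cast <;> ring
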